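/- Let r ≥ 1 and let λ, μ ∈ ℝ^r be strictly decreasing tuples with μ = w(λ) for some signed permutation w. Let a > 0 be a real number such that a occurs as an entry of λ but −a does not occur as an entry of λ. Then a or −a occurs as an entry of the pointwise minimum λ ∩ μ. -/

import Mathlib

/-- `y` is obtained from `x` by a signed permutation (an element of the Weyl
group `W(C_r)`). -/
def IsSignedPermOf {r : ℕ} (x y : Fin r → ℝ) : Prop :=
  ∃ (σ : Equiv.Perm (Fin r)) (ε : Fin r → ℝ),
    (∀ i, ε i = 1 ∨ ε i = -1) ∧ ∀ i, y i = ε i * x (σ i)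

/-- Let `λ, μ ∈ ℝ^r` be strictly decreasing with `μ = w(λ)` for a
signed permutation `w`.  If `a > 0` occurs as an entry of `λ` but `−a` does
not, then `a` or `−a` occurs as an entry of the pointwise minimum `λ ∩ μ`. -/
theorem stmt15 (r : ℕ) (hr : 1 ≤ r) (lam mu : Fin r → ℝ)
    (hlam : StrictAnti lam) (hmu : StrictAnti mu)
    (h : IsSignedPermOf lam mu)
    (a : ℝ) (ha : 0 < a) (hocc : ∃ i, lam i = a) (hnocc : ∀ i, lam i ≠ -a) :
    ∃ i, min (lam i) (mu i) = a ∨ min (lam i) (mu i) = -a := by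
  obtain ⟨σ, ε, hε, hμ⟩ := h
  obtain ⟨i0, hi0⟩ := hocc
  set j0 := σ.symm i0 with hj0
  have habs : ∀ i, |mu i| = |lam (σ i)| := by
    intro i
    rw [hμ i, abs_mul]
    rcases hε i with h1 | h1 <;> simp [h1]
  have hmuj0 : mu j0 = ε j0 * a := by
    rw [hμ j0, hj0, Equiv.apply_symm_apply, hi0]
  rcases hε j0 with h1 | h1
  · -- μ j0 = a
    rw [h1, one_mul] at hmuj0
    rcases le_or_gt j0 i0 with hle | hlt
    · refine ⟨j0, Or.inl ?_⟩
      have : a ≤ lam j0 := hi0 ▸ hlam.antitone hle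
      rw [min_eq_right (hmuj0 ▸ this), hmuj0]
    · refine ⟨i0, Or.inl ?_⟩
      have : a ≤ mu i0 := hmuj0 ▸ le_of_lt (hmu hlt)
      rw [min_eq_left (hi0 ▸ this), hi0]
  · -- μ j0 = -a
    rw [h1, neg_one_mul] at hmuj0
    by_cases hb : -a < lam j0
    · refine ⟨j0, Or.inr ?_⟩
      rw [min_eq_right (hmuj0 ▸ le_of_lt hb), hmuj0]
    · have hb' : lam j0 < -a := lt_of_le_of_ne (not_lt.mp hb) (hnocc j0)
      by_cases hc : a ≤ mu i0
      · refine ⟨i0, Or.inl ?_⟩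
        rw [min_eq_left (hi0 ▸ hc), hi0]
      · exfalso
        push_neg at hc
        have hij : i0 < j0 := by
          have : lam j0 < lam i0 := by rw [hi0]; linarith
          exact hlam.lt_iff_gt.mp this
        set S := Finset.univ.filter (fun i => |lam i| < a) with hS
        set T := Finset.univ.filter (fun i => |mu i| < a) with hT
        have hcard : S.card = T.card := by
          apply Finset.card_bij (fun i _ => σ.symm i)
          · intro i hi
            simp only [hT, Finset.mem_filter, Finset.mem_univ, true_and]
            rw [habs, Equiv.apply_symm_apply]
            simpa [hS] using hi
          · intro i _ j _ hind
            exact σ.symm.injective hind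
          · intro j hj
            refine ⟨σ j, ?_, by simp⟩
            simp only [hS, Finset.mem_filter, Finset.mem_univ, true_and]
            rw [← habs]
            simpa [hT] using hj
        have hSsub : S ⊆ Finset.Ioo i0 j0 := by
          intro i hi
          simp only [hS, Finset.mem_filter, Finset.mem_univ, true_and] at hi
          rw [abs_lt] at hi
          rw [Finset.mem_Ioo]
          constructor
          · exact hlam.lt_iff_gt.mp (by rw [hi0]; exact hi.2)
          · exact hlam.lt_iff_gt.mp (by linarith [hi.1])
        have hTsub : Finset.Ico i0 j0 ⊆ T := by
          intro i hi
          rw [Finset.mem_Ico] at hi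
          simp only [hT, Finset.mem_filter, Finset.mem_univ, true_and]
          rw [abs_lt]
          constructor
          · rw [← hmuj0]; exact hmu hi.2
          · exact lt_of_le_of_lt (hmu.antitone hi.1) hc
        have h1' : S.card ≤ (Finset.Ioo i0 j0).card := Finset.card_le_card hSsub
        have h2' : (Finset.Ico i0 j0).card ≤ T.card := Finset.card_le_card hTsub
        rw [Fin.card_Ioo] at h1'
        rw [Fin.card_Ico] at h2'
        have : (i0 : ℕ) < j0 := hij
        omega
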